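/- Let A, B, C, D be n×n matrices over the tropical semiring such that B = C ⊗ A and A = D ⊗ B (tropical matrix products). If B has full row rank, then for every row index i there exist an index κ ∈ {1,…,n} and a real scalar c = c_{iκ} ∈ ℝ such that b_{it} = c ⊗ a_{κt} for every t ∈ {1,…,n}; that is, every row of B is a real scalar tropical multiple of some row of A. -/

import Mathlib

/-- The tropical (max-plus) semiring carrier: `ℝ ∪ {-∞}`, with `⊥` playing the
role of `-∞`. -/
abbrev Trop : Type := WithBot ℝ

/-- Tropical matrix multiplication: `(A ⊗ B) i j = max_k (A i k + B k j)`. -/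
def tropMulMat {n m p : ℕ} (A : Matrix (Fin n) (Fin m) Trop)
    (B : Matrix (Fin m) (Fin p) Trop) : Matrix (Fin n) (Fin p) Trop :=
  fun i j => Finset.univ.sup fun k => A i k + B k j

/-- A tropical matrix has full row rank if no row is a tropical linear
combination of the other rows. -/
def FullRowRank {n m : ℕ} (B : Matrix (Fin n) (Fin m) Trop) : Prop :=
  ¬ ∃ (i : Fin n) (lam : Fin n → Trop),
      ∀ t, B i t = (Finset.univ.erase i).sup fun k => lam k + B k t

lemma trop_max_add (a b c : Trop) : (a ⊔ b) + c = (a + c) ⊔ (b + c) := by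
  rcases le_total a b with h | h
  · rw [sup_eq_right.mpr h, sup_eq_right.mpr (add_le_add_left h c)]
  · rw [sup_eq_left.mpr h, sup_eq_left.mpr (add_le_add_left h c)]

lemma trop_add_max (a b c : Trop) : c + (a ⊔ b) = (c + a) ⊔ (c + b) := by
  rcases le_total a b with h | h
  · rw [sup_eq_right.mpr h, sup_eq_right.mpr (add_le_add_right h c)]
  · rw [sup_eq_left.mpr h, sup_eq_left.mpr (add_le_add_right h c)]

lemma trop_sup_add {α : Type*} (s : Finset α) (f : α → Trop) (b : Trop) :
    s.sup f + b = s.sup fun a => f a + b := by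
  induction s using Finset.cons_induction with
  | empty => simp
  | cons a s ha ih => rw [Finset.sup_cons, Finset.sup_cons, ← ih, trop_max_add]

lemma trop_add_sup {α : Type*} (s : Finset α) (f : α → Trop) (b : Trop) :
    b + s.sup f = s.sup fun a => b + f a := by
  induction s using Finset.cons_induction with
  | empty => simp
  | cons a s ha ih => rw [Finset.sup_cons, Finset.sup_cons, ← ih, trop_add_max]

lemma trop_real_of_ne_bot (x : Trop) (h : x ≠ ⊥) : ∃ r : ℝ, x = (r : Trop) := by
  cases x with
  | none => exact absurd rfl h
  | some r => exact ⟨r, rfl⟩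

theorem rows_are_scaled_rows {n : ℕ} (A B C D : Matrix (Fin n) (Fin n) Trop)
    (hB : B = tropMulMat C A) (hA : A = tropMulMat D B)
    (hfull : FullRowRank B) :
    ∀ i : Fin n, ∃ (κ : Fin n) (c : ℝ), C i κ = (c : Trop) ∧
      ∀ t : Fin n, B i t = (c : Trop) + A κ t := by
  intro i
  have hB' : ∀ j t, B j t = Finset.univ.sup fun k => C j k + A k t := by
    intro j t; rw [hB]; rfl
  have hA' : ∀ k t, A k t = Finset.univ.sup fun l => D k l + B l t := by
    intro k t; rw [hA]; rfl
  -- B i t as a double sup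
  have hBit : ∀ t, B i t = Finset.univ.sup fun k =>
      Finset.univ.sup fun l => C i k + (D k l + B l t) := by
    intro t
    rw [hB' i t]
    refine Finset.sup_congr rfl fun k _ => ?_
    rw [hA' k t, trop_add_sup]
  have hterm : ∀ t k l, C i k + (D k l + B l t) ≤ B i t := by
    intro t k l
    rw [hBit t]
    refine le_trans (Finset.le_sup (f := fun l => C i k + (D k l + B l t))
      (Finset.mem_univ l)) ?_
    exact Finset.le_sup (f := fun k => Finset.univ.sup fun l => C i k + (D k l + B l t))
      (Finset.mem_univ k)
  -- E l := (C ⊗ D) i l ;  E l + B l t ≤ B i t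
  have hEle : ∀ t l, (Finset.univ.sup fun k => C i k + D k l) + B l t ≤ B i t := by
    intro t l
    rw [trop_sup_add]
    exact Finset.sup_le fun k _ => by rw [add_assoc]; exact hterm t k l
  -- the off-diagonal sup is ≤ B i t
  have hSle : ∀ t, ((Finset.univ.erase i).sup fun l =>
      (Finset.univ.sup fun k => C i k + D k l) + B l t) ≤ B i t :=
    fun t => Finset.sup_le fun l _ => hEle t l
  -- B i t ≤ diagonal part ⊔ off-diagonal part
  have hBle : ∀ t, B i t ≤ ((Finset.univ.sup fun k => C i k + D k i) + B i t) ⊔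
      ((Finset.univ.erase i).sup fun l =>
        (Finset.univ.sup fun k => C i k + D k l) + B l t) := by
    intro t
    conv_lhs => rw [hBit t]
    refine Finset.sup_le fun k _ => Finset.sup_le fun l _ => ?_
    by_cases hl : l = i
    · rw [hl]
      refine le_sup_of_le_left ?_
      rw [trop_sup_add, ← add_assoc]
      exact Finset.le_sup (f := fun k => C i k + D k i + B i t) (Finset.mem_univ k)
    · refine le_sup_of_le_right ?_
      refine le_trans ?_ (Finset.le_sup
        (f := fun l => (Finset.univ.sup fun k => C i k + D k l) + B l t)
        (Finset.mem_erase.mpr ⟨hl, Finset.mem_univ l⟩))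
      rw [trop_sup_add, ← add_assoc]
      exact Finset.le_sup (f := fun k => C i k + D k l + B l t) (Finset.mem_univ k)
  -- full row rank: some t₀ where the off-diagonal part does not reach B i t₀
  have hex : ∃ t, ¬ B i t ≤ (Finset.univ.erase i).sup fun l =>
      (Finset.univ.sup fun k => C i k + D k l) + B l t := by
    by_contra h
    push_neg at h
    exact hfull ⟨i, fun l => Finset.univ.sup fun k => C i k + D k l,
      fun t => le_antisymm (h t) (hSle t)⟩
  obtain ⟨t₀, ht₀⟩ := hex
  have h1 : B i t₀ ≤ (Finset.univ.sup fun k => C i k + D k i) + B i t₀ := by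
    have hb := hBle t₀
    rcases le_total ((Finset.univ.sup fun k => C i k + D k i) + B i t₀)
      ((Finset.univ.erase i).sup fun l =>
        (Finset.univ.sup fun k => C i k + D k l) + B l t₀) with h | h
    · rw [sup_eq_right.mpr h] at hb; exact absurd hb ht₀
    · rwa [sup_eq_left.mpr h] at hb
  have h2 : (Finset.univ.sup fun k => C i k + D k i) + B i t₀ ≤ B i t₀ := hEle t₀ i
  obtain ⟨r, hr⟩ : ∃ r : ℝ, B i t₀ = (r : Trop) :=
    trop_real_of_ne_bot _ fun hb => ht₀ (hb ▸ bot_le)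
  -- the diagonal entry of C ⊗ D is 0
  have hEi : (Finset.univ.sup fun k => C i k + D k i) = (0 : Trop) := by
    have heq : (Finset.univ.sup fun k => C i k + D k i) + (r : Trop) = (r : Trop) := by
      rw [← hr]; exact le_antisymm h2 h1
    rcases eq_or_ne (Finset.univ.sup fun k => C i k + D k i) ⊥ with he | he
    · rw [he, WithBot.bot_add] at heq; exact absurd heq (by simp)
    · obtain ⟨e, he'⟩ := trop_real_of_ne_bot _ he
      rw [he', ← WithBot.coe_add] at heq
      have h0 : e + r = r := by exact_mod_cast heq
      have : e = 0 := by linarith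
      rw [he', this]; rfl
  obtain ⟨κ, -, hκ⟩ := Finset.exists_mem_eq_sup (Finset.univ : Finset (Fin n))
    ⟨i, Finset.mem_univ i⟩ (fun k => C i k + D k i)
  have hκ0 : C i κ + D κ i = (0 : Trop) := by rw [← hκ]; exact hEi
  obtain ⟨c, hc⟩ : ∃ c : ℝ, C i κ = (c : Trop) :=
    trop_real_of_ne_bot _ fun hb => by simp [hb, WithBot.bot_add] at hκ0
  obtain ⟨d, hd⟩ : ∃ d : ℝ, D κ i = (d : Trop) :=
    trop_real_of_ne_bot _ fun hb => by simp [hb, WithBot.add_bot] at hκ0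
  have hcd : c + d = 0 := by
    rw [hc, hd, ← WithBot.coe_add] at hκ0
    exact_mod_cast hκ0
  refine ⟨κ, c, hc, fun t => ?_⟩
  refine le_antisymm ?_ ?_
  · have hAge : (d : Trop) + B i t ≤ A κ t := by
      rw [hA' κ t, ← hd]
      exact Finset.le_sup (f := fun l => D κ l + B l t) (Finset.mem_univ i)
    calc B i t = (c : Trop) + ((d : Trop) + B i t) := by
          rw [← add_assoc, ← WithBot.coe_add, hcd]; simp
      _ ≤ (c : Trop) + A κ t := add_le_add_right hAge _
  · rw [hB' i t, ← hc]
    exact Finset.le_sup (f := fun k => C i k + A k t) (Finset.mem_univ κ)
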